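/- arXiv:0810.4518 — 5 statements merged into one kernel-verified Lean document; each statement's English description precedes it below -/
import Mathlib

section
/- Let k be an algebraically closed field of characteristic p > 0 and let d ≥ 1. Let R be a standard-graded k-algebra and let φ : P → R be an injective degree-preserving k-algebra homomorphism from the standard-graded polynomial ring P = k[x_0, …, x_d] such that R is a finitely generated P-module (a graded Noether normalization; in particular R has Krull dimension d+1). Let n ≥ d+1, let g_1, …, g_n ∈ P be homogeneous of degrees a_1, …, a_n, and let m ∈ ℕ be such that every homogeneous polynomial of degree m lies in the ideal (g_1, …, g_n) of P. Then every homogeneous element of R of degree m + d lies in the tight closure of the ideal (φ(g_1), …, φ(g_n)) of R. -/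
open scoped BigOperators

/-- The `q`-th bracket power `I^{[q]}` of an ideal: the ideal generated by all `q`-th
powers of elements of `I`. -/
def bracketPow {R : Type*} [CommRing R] (I : Ideal R) (q : ℕ) : Ideal R :=
  Ideal.span ((fun f => f ^ q) '' (I : Set R))

/-- Tight closure of an ideal in a ring of characteristic `p`. -/
def tightClosure {R : Type*} [CommRing R] (p : ℕ) (I : Ideal R) : Set R :=
  {x | ∃ u : R, (∀ P ∈ minimalPrimes R, u ∉ P) ∧
    ∃ e₀ : ℕ, ∀ e : ℕ, e₀ ≤ e → u * x ^ p ^ e ∈ bracketPow I (p ^ e)}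

lemma degree_add' {ι : Type*} (f g : ι →₀ ℕ) : (f + g).degree = f.degree + g.degree := by
  simp [Finsupp.degree_eq_weight_one, map_add]

lemma degree_single' {ι : Type*} (i : ι) (n : ℕ) : (Finsupp.single i n).degree = n := by
  simp [Finsupp.degree_eq_weight_one, Finsupp.weight_apply, Finsupp.sum_single_index]

/-- choose a sub-finsupp of prescribed degree -/
lemma exists_le_degree_eq {ι : Type*} (m : ℕ) (γ : ι →₀ ℕ) (h : m ≤ γ.degree) :
    ∃ δ : ι →₀ ℕ, δ ≤ γ ∧ δ.degree = m := by
  classical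
  induction m with
  | zero => exact ⟨0, zero_le, map_zero _⟩
  | succ m ih =>
    obtain ⟨δ, hle, hdeg⟩ := ih (le_trans (Nat.le_succ m) h)
    have hne : ¬ γ ≤ δ := by
      intro hc
      rw [le_antisymm hc hle] at h
      omega
    rw [Finsupp.le_def, not_forall] at hne
    obtain ⟨i, hi⟩ := hne
    refine ⟨δ + Finsupp.single i 1, ?_, ?_⟩
    · rw [Finsupp.le_def]
      intro j
      rcases eq_or_ne j i with rfl | hji
      · simp only [Finsupp.add_apply, Finsupp.single_eq_same]
        omega
      · simpa [Finsupp.single_eq_of_ne' (Ne.symm hji)] using hle j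
    · rw [degree_add', hdeg, degree_single']

lemma degree_eq_sum_univ {ι : Type*} [Fintype ι] (γ : ι →₀ ℕ) :
    γ.degree = ∑ i : ι, γ i := by
  classical
  exact Finset.sum_subset (Finset.subset_univ _)
    (fun i _ hi => by simpa using (Finsupp.notMem_support_iff.mp hi))

/-- Key polynomial lemma: homogeneous polynomials of high degree lie in the
bracket power of an ideal containing all forms of degree `m`. -/
lemma mem_bracketPow_of_isHomogeneous {k : Type*} [CommRing k] {d m q t : ℕ}
    (hq : 1 ≤ q) (I : Ideal (MvPolynomial (Fin (d + 1)) k))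
    (hI : ∀ f : MvPolynomial (Fin (d + 1)) k, f.IsHomogeneous m → f ∈ I)
    (f : MvPolynomial (Fin (d + 1)) k) (hf : f.IsHomogeneous t)
    (ht : q * (m + d) ≤ t + d) : f ∈ bracketPow I q := by
  classical
  rw [← MvPolynomial.support_sum_monomial_coeff f]
  refine Ideal.sum_mem _ (fun α hα => ?_)
  have hαdeg : α.degree = t := by
    rw [Finsupp.degree_eq_weight_one]
    exact hf (MvPolynomial.mem_support_iff.mp hα)
  -- the floor-division exponent
  set β : Fin (d + 1) →₀ ℕ := α.mapRange (fun x => x / q) (Nat.zero_div q) with hβ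
  have hβa : ∀ i, β i = α i / q := fun i => rfl
  -- arithmetic : m ≤ degree β
  have hmβ : m ≤ β.degree := by
    by_contra hcon
    push_neg at hcon
    have h1 : t = q * β.degree + ∑ i : Fin (d + 1), α i % q := by
      rw [← hαdeg, degree_eq_sum_univ, degree_eq_sum_univ, Finset.mul_sum,
        ← Finset.sum_add_distrib]
      refine Finset.sum_congr rfl (fun i _ => ?_)
      rw [hβa]
      exact (Nat.div_add_mod (α i) q).symm
    have h2 : (∑ i : Fin (d + 1), α i % q) + (q * d + q) ≥ 0 := Nat.zero_le _
    have h2' : (∑ i : Fin (d + 1), α i % q) + d + 1 ≤ q * d + q := by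
      have : ∑ i : Fin (d + 1), (α i % q + 1) ≤ ∑ _i : Fin (d + 1), q :=
        Finset.sum_le_sum (fun i _ => Nat.mod_lt (α i) (by omega : 0 < q))
      rw [Finset.sum_add_distrib, Finset.sum_const, Finset.sum_const] at this
      simp [mul_comm, mul_add, add_mul, smul_eq_mul] at this ⊢
      linarith
    have h3 : q * β.degree + q ≤ q * m := by
      have := Nat.mul_le_mul_left q (by omega : β.degree + 1 ≤ m)
      simpa [mul_add] using this
    have ht' : q * m + q * d ≤ t + d := by
      have := ht
      rw [mul_add] at this
      exact this
    linarith [h1, h2', h3, ht']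
  obtain ⟨δ, hδle, hδdeg⟩ := exists_le_degree_eq m β hmβ
  have hqδ : q • δ ≤ α := by
    rw [Finsupp.le_def]
    intro i
    have h1 : δ i ≤ β i := hδle i
    have : (q • δ) i = q * δ i := rfl
    rw [this, hβa] at *
    have := Nat.div_mul_le_self (α i) q
    calc q * δ i ≤ q * (α i / q) := Nat.mul_le_mul_left q h1
      _ ≤ α i := by rw [mul_comm]; exact Nat.div_mul_le_self (α i) q
  have hsplit : MvPolynomial.monomial α (MvPolynomial.coeff α f)
      = MvPolynomial.monomial (α - q • δ) (MvPolynomial.coeff α f)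
        * (MvPolynomial.monomial δ 1) ^ q := by
    rw [MvPolynomial.monomial_pow, MvPolynomial.monomial_mul, one_pow, mul_one,
      tsub_add_cancel_of_le hqδ]
  rw [hsplit]
  refine Ideal.mul_mem_left _ _ (Ideal.subset_span ?_)
  exact ⟨MvPolynomial.monomial δ 1, hI _ (MvPolynomial.isHomogeneous_monomial _ hδdeg), rfl⟩

lemma map_mem_bracketPow {R S : Type*} [CommRing R] [CommRing S] (f : R →+* S)
    {I : Ideal R} {q : ℕ} {x : R} (hx : x ∈ bracketPow I q) :
    f x ∈ bracketPow (Ideal.map f I) q := by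
  induction hx using Submodule.span_induction with
  | mem y hy =>
    obtain ⟨z, hz, rfl⟩ := hy
    exact Ideal.subset_span ⟨f z, Ideal.mem_map_of_mem f hz, (map_pow f z q).symm⟩
  | zero => simp only [map_zero]; exact Ideal.zero_mem _
  | add y z _ _ hy hz => rw [map_add]; exact Ideal.add_mem _ hy hz
  | smul c y _ hy =>
    rw [smul_eq_mul, map_mul]
    exact Ideal.mul_mem_left _ _ hy

lemma exists_mul_pow_eq_zero_of_mem_minimalPrime {R : Type*} [CommRing R]
    {Q : Ideal R} (hQ : Q ∈ minimalPrimes R) {x : R} (hx : x ∈ Q) :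
    ∃ (n : ℕ) (s : R), s ∉ Q ∧ s * x ^ n = 0 := by
  haveI hQp : Q.IsPrime := hQ.1.1
  have hnil : IsNilpotent (algebraMap R (Localization Q.primeCompl) x) := by
    rw [nilpotent_iff_mem_prime]
    intro J hJ
    have hsub := IsLocalization.subsingleton_primeSpectrum_of_mem_minimalPrimes Q hQ
      (Localization Q.primeCompl)
    have hJM : J = IsLocalRing.maximalIdeal _ := congrArg PrimeSpectrum.asIdeal
      (Subsingleton.elim (⟨J, hJ⟩ : PrimeSpectrum _)
        ⟨_, (IsLocalRing.maximalIdeal.isMaximal _).isPrime⟩)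
    rw [hJM]
    exact (IsLocalization.AtPrime.to_map_mem_maximal_iff _ Q x).mpr hx
  obtain ⟨n, hn⟩ := hnil
  rw [← map_pow] at hn
  obtain ⟨s, hs⟩ := (IsLocalization.map_eq_zero_iff Q.primeCompl _ _).mp hn
  exact ⟨n, (s : R), s.2, hs⟩

theorem generic_tight_closure_bound
    {k : Type*} [Field k] [IsAlgClosed k] (p : ℕ) [Fact p.Prime] [CharP k p]
    (d : ℕ) (hd : 1 ≤ d)
    {R : Type*} [CommRing R] [IsNoetherianRing R] [Algebra k R]
    (𝒜 : ℕ → Submodule k R) [GradedAlgebra 𝒜]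
    (hstd : ∀ n, 𝒜 n = 𝒜 1 ^ n)
    (hfd : FiniteDimensional k (𝒜 1))
    (φ : MvPolynomial (Fin (d + 1)) k →ₐ[k] R)
    (hφinj : Function.Injective φ)
    (hφdeg : ∀ (n : ℕ) (f : MvPolynomial (Fin (d + 1)) k),
      f.IsHomogeneous n → φ f ∈ 𝒜 n)
    (hfin : RingHom.Finite φ.toRingHom)
    (n : ℕ) (hn : d + 1 ≤ n)
    (g : Fin n → MvPolynomial (Fin (d + 1)) k) (a : Fin n → ℕ)
    (hg : ∀ i, (g i).IsHomogeneous (a i))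
    (m : ℕ)
    (hm : ∀ f : MvPolynomial (Fin (d + 1)) k, f.IsHomogeneous m →
      f ∈ Ideal.span (Set.range g)) :
    ∀ r ∈ 𝒜 (m + d),
      r ∈ tightClosure p (Ideal.span (Set.range fun i => φ (g i))) := by
  classical
  intro r hr
  set J : Ideal R := Ideal.span (Set.range fun i => φ (g i)) with hJdef
  -- mapping bracket powers through φ
  have hmap : ∀ (q : ℕ) (x : MvPolynomial (Fin (d + 1)) k),
      x ∈ bracketPow (Ideal.span (Set.range g)) q → φ x ∈ bracketPow J q := by
    intro q x hx
    have h1 := map_mem_bracketPow φ.toRingHom hx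
    have h2 : Ideal.map φ.toRingHom (Ideal.span (Set.range g)) = J := by
      rw [Ideal.map_span, hJdef, ← Set.range_comp]
      rfl
    rwa [h2] at h1
  -- the module structure on R over the polynomial ring
  letI : Algebra (MvPolynomial (Fin (d + 1)) k) R := φ.toRingHom.toAlgebra
  haveI hMF : Module.Finite (MvPolynomial (Fin (d + 1)) k) R := hfin
  obtain ⟨T, hT⟩ := Module.finite_def.mp hMF
  set C : ℕ := T.sup (fun z => (DirectSum.decompose 𝒜 z).support.sup id) + 1 with hCdef
  -- main graded inclusion lemma
  have main : ∀ q t : ℕ, 1 ≤ q → q * (m + d) + C ≤ t →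
      ∀ y ∈ 𝒜 t, y ∈ bracketPow J q := by
    intro q t hq ht y hy
    have hy' : y ∈ Submodule.span (MvPolynomial (Fin (d + 1)) k) (T : Set R) := by
      rw [hT]; exact Submodule.mem_top
    obtain ⟨co, -, hco⟩ := Submodule.mem_span_finset.mp hy'
    have hyproj : (GradedRing.proj 𝒜 t) y = y := by
      rw [GradedRing.proj_apply]
      exact DirectSum.decompose_of_mem_same 𝒜 hy
    rw [← hyproj, ← hco, map_sum]
    refine Ideal.sum_mem _ (fun z hz => ?_)
    have hsm : co z • z = φ (co z) * z := rfl
    rw [hsm]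
    have hkey : ∀ (f : MvPolynomial (Fin (d + 1)) k) (w : ℕ) (zw : R), zw ∈ 𝒜 w → w < C →
        GradedRing.proj 𝒜 t (φ f * zw) ∈ bracketPow J q := by
      intro f w zw hzw hwC
      have hfdec : φ f * zw = ∑ s ∈ Finset.range (f.totalDegree + 1),
          φ (MvPolynomial.homogeneousComponent s f) * zw := by
        rw [← Finset.sum_mul, ← map_sum, MvPolynomial.sum_homogeneousComponent]
      rw [hfdec, map_sum]
      refine Ideal.sum_mem _ (fun s _ => ?_)
      have h1 : φ (MvPolynomial.homogeneousComponent s f) ∈ 𝒜 s :=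
        hφdeg s _ (MvPolynomial.homogeneousComponent_isHomogeneous s f)
      have h3 : φ (MvPolynomial.homogeneousComponent s f) * zw ∈ 𝒜 (s + w) :=
        SetLike.mul_mem_graded h1 hzw
      by_cases hsw : s + w = t
      · rw [GradedRing.proj_apply]
        rw [DirectSum.decompose_of_mem_same 𝒜 (hsw ▸ h3)]
        have hfs : MvPolynomial.homogeneousComponent s f
            ∈ bracketPow (Ideal.span (Set.range g)) q := by
          refine mem_bracketPow_of_isHomogeneous hq _ hm _
            (MvPolynomial.homogeneousComponent_isHomogeneous s f) ?_
          omega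
        exact Ideal.mul_mem_right _ _ (hmap q _ hfs)
      · rw [GradedRing.proj_apply, DirectSum.decompose_of_mem_ne 𝒜 h3 hsw]
        exact Ideal.zero_mem _
    have hzdec : φ (co z) * z = ∑ w ∈ (DirectSum.decompose 𝒜 z).support,
        φ (co z) * (DirectSum.decompose 𝒜 z w : R) := by
      rw [← Finset.mul_sum, DirectSum.sum_support_decompose]
    rw [hzdec, map_sum]
    refine Ideal.sum_mem _ (fun w hw => ?_)
    refine hkey (co z) w _ (SetLike.coe_mem _) ?_
    rw [hCdef]
    have h5 : w ≤ (DirectSum.decompose 𝒜 z).support.sup id := Finset.le_sup (f := id) hw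
    have h4 : (DirectSum.decompose 𝒜 z).support.sup id
        ≤ T.sup (fun z => (DirectSum.decompose 𝒜 z).support.sup id) :=
      Finset.le_sup (f := fun z => (DirectSum.decompose 𝒜 z).support.sup id) hz
    omega
  -- no minimal prime contains the span of 𝒜 C
  have hKQ : ∀ Q ∈ minimalPrimes R, ¬ (Ideal.span ((𝒜 C : Set R)) ≤ Q) := by
    intro Q hQ hle
    haveI hQp : Q.IsPrime := hQ.1.1
    have h𝒜C : ∀ x ∈ 𝒜 C, x ∈ Q := fun x hx => hle (Ideal.subset_span hx)
    have h1 : ∀ x ∈ 𝒜 1, x ∈ Q := by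
      intro x hx
      have hp1 : x ^ C ∈ 𝒜 (C • 1) := SetLike.pow_mem_graded C hx
      rw [smul_eq_mul, mul_one] at hp1
      exact hQp.mem_of_pow_mem C (h𝒜C _ hp1)
    have hwQ : ∀ w : ℕ, 0 < w → ∀ x ∈ 𝒜 w, x ∈ Q := by
      intro w hwpos x hx
      obtain ⟨v, rfl⟩ : ∃ v, w = v + 1 := ⟨w - 1, by omega⟩
      rw [hstd (v + 1), pow_succ] at hx
      have hmul : 𝒜 1 ^ v * 𝒜 1 ≤ Submodule.restrictScalars k (Q) :=
        Submodule.mul_le.mpr (fun a _ b hb => Q.mul_mem_left a (h1 b hb))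
      exact hmul hx
    have hX0 : φ (MvPolynomial.X 0) ∈ Q :=
      h1 _ (hφdeg 1 _ (MvPolynomial.isHomogeneous_X _ _))
    obtain ⟨n0, s, hsQ, hs0⟩ := exists_mul_pow_eq_zero_of_mem_minimalPrime hQ hX0
    have hxn : φ (MvPolynomial.X 0) ^ n0 ∈ 𝒜 n0 := by
      have := SetLike.pow_mem_graded n0 (hφdeg 1 _ (MvPolynomial.isHomogeneous_X
        (R := k) (σ := Fin (d + 1)) 0))
      rwa [smul_eq_mul, mul_one] at this
    -- project the relation s * x^n0 = 0 to degree n0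
    have hproj : (DirectSum.decompose 𝒜 s 0 : R) * φ (MvPolynomial.X 0) ^ n0 = 0 := by
      have hc := congrArg (GradedRing.proj 𝒜 n0) hs0
      rw [map_zero] at hc
      rw [← hc]
      conv_rhs => rw [← DirectSum.sum_support_decompose 𝒜 s, Finset.sum_mul, map_sum]
      by_cases h0 : 0 ∈ (DirectSum.decompose 𝒜 s).support
      · rw [Finset.sum_eq_single_of_mem 0 h0 ?_]
        · rw [GradedRing.proj_apply]
          have hmem : (DirectSum.decompose 𝒜 s 0 : R) * φ (MvPolynomial.X 0) ^ n0
              ∈ 𝒜 (0 + n0) := SetLike.mul_mem_graded (SetLike.coe_mem _) hxn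
          rw [zero_add] at hmem
          rw [DirectSum.decompose_of_mem_same 𝒜 hmem]
        · intro w _ hwne
          rw [GradedRing.proj_apply]
          have hmem : (DirectSum.decompose 𝒜 s w : R) * φ (MvPolynomial.X 0) ^ n0
              ∈ 𝒜 (w + n0) := SetLike.mul_mem_graded (SetLike.coe_mem _) hxn
          rw [DirectSum.decompose_of_mem_ne 𝒜 hmem (by omega : w + n0 ≠ n0)]
      · have hz : (DirectSum.decompose 𝒜 s 0 : R) = 0 := by
          rw [DFinsupp.notMem_support_iff.mp h0]; rfl
        rw [hz, zero_mul]
        refine (Finset.sum_eq_zero (fun w hw => ?_)).symm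
        rw [GradedRing.proj_apply]
        have hmem : (DirectSum.decompose 𝒜 s w : R) * φ (MvPolynomial.X 0) ^ n0
            ∈ 𝒜 (w + n0) := SetLike.mul_mem_graded (SetLike.coe_mem _) hxn
        have hwne : w ≠ 0 := fun h => h0 (h ▸ hw)
        rw [DirectSum.decompose_of_mem_ne 𝒜 hmem (by omega : w + n0 ≠ n0)]
    -- the degree-zero component of s is a scalar
    set s0 : R := (DirectSum.decompose 𝒜 s 0 : R) with hs0def
    have hs00 : s0 ∈ 𝒜 0 := SetLike.coe_mem _
    rw [hstd 0, pow_zero] at hs00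
    obtain ⟨c, hc⟩ := Submodule.mem_one.mp hs00
    by_cases hc0 : c = 0
    · -- then every component of s lies in Q, contradiction
      apply hsQ
      rw [← DirectSum.sum_support_decompose 𝒜 s]
      refine Ideal.sum_mem _ (fun w hw => ?_)
      rcases Nat.eq_zero_or_pos w with rfl | hwpos
      · have hz0 : s0 = 0 := by rw [← hc, hc0, map_zero]
        rw [← hs0def, hz0]
        exact Q.zero_mem
      · exact hwQ w hwpos _ (SetLike.coe_mem _)
    · -- then φ (X 0) ^ n0 = 0, contradicting injectivity
      rw [← hc, ← Algebra.smul_def] at hproj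
      have h : φ (MvPolynomial.X 0) ^ n0 = 0 := by
        have h6 := congrArg (fun y => c⁻¹ • y) hproj
        simpa [smul_smul, inv_mul_cancel₀ hc0] using h6
      rw [← map_pow, show (0 : R) = φ 0 from (map_zero φ).symm] at h
      exact pow_ne_zero n0 (MvPolynomial.X_ne_zero 0) (hφinj h)
  -- prime avoidance: find u ∈ span (𝒜 C) avoiding all minimal primes
  have hfin𝔓 : (minimalPrimes R).Finite := minimalPrimes.finite_of_isNoetherianRing R
  have hsub : ¬ ((Ideal.span ((𝒜 C : Set R)) : Set R)
      ⊆ ⋃ Q ∈ (hfin𝔓.toFinset : Set (Ideal R)), (Q : Set R)) := by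
    rw [Ideal.subset_union_prime (⊥ : Ideal R) (⊥ : Ideal R)
      (fun Q hQ _ _ => (hfin𝔓.mem_toFinset.mp hQ).1.1)]
    rintro ⟨Q, hQ𝔓, hle⟩
    exact hKQ Q (hfin𝔓.mem_toFinset.mp hQ𝔓) hle
  obtain ⟨u, huK, hu⟩ := Set.not_subset.mp hsub
  have hu' : ∀ Q ∈ minimalPrimes R, u ∉ Q := by
    intro Q hQ huQ
    exact hu (Set.mem_biUnion (hfin𝔓.mem_toFinset.mpr hQ) huQ)
  refine ⟨u, hu', 0, fun e _ => ?_⟩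
  have hq : 1 ≤ p ^ e := Nat.one_le_pow e p (Fact.out : p.Prime).pos
  clear hu hu'
  induction huK using Submodule.span_induction with
  | mem x hx =>
    have hrq : r ^ p ^ e ∈ 𝒜 (p ^ e * (m + d)) := by
      have := SetLike.pow_mem_graded (p ^ e) hr
      rwa [smul_eq_mul] at this
    have hxr : x * r ^ p ^ e ∈ 𝒜 (C + p ^ e * (m + d)) := SetLike.mul_mem_graded hx hrq
    exact main (p ^ e) (C + p ^ e * (m + d)) hq (by omega) _ hxr
  | zero => rw [zero_mul]; exact Ideal.zero_mem _
  | add x y _ _ hx hy => rw [add_mul]; exact Ideal.add_mem _ hx hy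
  | smul c x _ hx => rw [smul_mul_assoc]; exact Submodule.smul_mem _ c hx
end

section
/- Let k be a field and let R be a standard-graded k-algebra of Krull dimension one. Let f ∈ R be homogeneous of degree a ≥ 1 and not contained in any minimal prime of R (the genericity condition). Then there exists γ ∈ ℕ such that for every β ∈ ℕ and every m ≥ βa + γ, every homogeneous element of R of degree m lies in the ideal (f^β). -/
open scoped BigOperators

theorem dimension_one_ideal_bound
    {k : Type*} [Field k]
    {R : Type*} [CommRing R] [IsNoetherianRing R] [Algebra k R]
    (𝒜 : ℕ → Submodule k R) [GradedAlgebra 𝒜]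
    (hstd : ∀ n, 𝒜 n = 𝒜 1 ^ n)
    (hfd : FiniteDimensional k (𝒜 1))
    (hdim : ringKrullDim R = 1)
    (f : R) (a : ℕ) (ha : 1 ≤ a) (hf : f ∈ 𝒜 a)
    (hgen : ∀ P ∈ minimalPrimes R, f ∉ P) :
    ∃ γ : ℕ, ∀ β : ℕ, ∀ m : ℕ, β * a + γ ≤ m →
      ∀ r ∈ 𝒜 m, r ∈ Ideal.span {f ^ β} := by
  classical
  have hRnt : Nontrivial R := by
    by_contra h
    rw [not_nontrivial_iff_subsingleton] at h
    rw [ringKrullDim_eq_bot_of_subsingleton] at hdim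
    exact absurd hdim (by simp)
  -- no chain of three primes
  have noChain : ∀ p q r : Ideal R, p.IsPrime → q.IsPrime → r.IsPrime →
      p < q → q < r → False := by
    intro p q r hp hq hr h1 h2
    have h2le : ((2 : ℕ) : WithBot ℕ∞) ≤ ringKrullDim R :=
      Order.LTSeries.length_le_krullDim (α := PrimeSpectrum R)
        ⟨2, ![⟨p, hp⟩, ⟨q, hq⟩, ⟨r, hr⟩], by
          intro i
          fin_cases i
          · exact h1
          · exact h2⟩
    rw [hdim] at h2le
    norm_num at h2le
  -- the irrelevant ideal
  set M : Ideal R := (HomogeneousIdeal.irrelevant 𝒜).toIdeal with hM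
  have hmemM : ∀ x : R, x ∈ M ↔ (DirectSum.decompose 𝒜 x 0 : R) = 0 := by
    intro x; rfl
  have hMne : M ≠ ⊤ := by
    intro h
    have h1 : (1 : R) ∈ M := h ▸ Submodule.mem_top
    rw [hmemM] at h1
    rw [DirectSum.decompose_of_mem_same 𝒜 (SetLike.GradedOne.one_mem)] at h1
    exact one_ne_zero h1
  -- degree zero parts
  have h𝒜0 : ∀ x : R, x ∈ 𝒜 0 → ∃ c : k, algebraMap k R c = x := by
    intro x hx
    rw [hstd 0, pow_zero] at hx
    exact (Submodule.mem_one).1 hx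
  -- homogeneous proper ideals lie in the irrelevant ideal
  have hhom_le : ∀ Q : Ideal R, Q.IsHomogeneous 𝒜 → Q ≠ ⊤ → Q ≤ M := by
    intro Q hQ hQtop x hx
    rw [hmemM]
    by_contra hne
    have h0 : (DirectSum.decompose 𝒜 x 0 : R) ∈ Q := hQ 0 hx
    obtain ⟨c, hc⟩ := h𝒜0 _ (SetLike.coe_mem _)
    have hc0 : c ≠ 0 := by
      rintro rfl
      rw [map_zero] at hc
      exact hne hc.symm
    have : (1 : R) ∈ Q := by
      have := Q.mul_mem_left (algebraMap k R c⁻¹) h0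
      rw [← hc, ← map_mul, inv_mul_cancel₀ hc0, map_one] at this
      exact this
    exact hQtop (Q.eq_top_iff_one.2 this)
  -- the irrelevant ideal is maximal
  have hMmax : M.IsMaximal := by
    rw [Ideal.isMaximal_iff]
    refine ⟨fun h => hMne (M.eq_top_iff_one.2 h), ?_⟩
    intro J x hMJ hxM hxJ
    obtain ⟨c, hc⟩ := h𝒜0 (DirectSum.decompose 𝒜 x 0 : R) (SetLike.coe_mem _)
    have hc0 : c ≠ 0 := by
      rintro rfl
      rw [map_zero] at hc
      exact hxM ((hmemM x).2 hc.symm)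
    have hsub : x - (DirectSum.decompose 𝒜 x 0 : R) ∈ M := by
      rw [hmemM]
      rw [DirectSum.decompose_sub, DirectSum.decompose_coe]
      simp
    have hx0J : (DirectSum.decompose 𝒜 x 0 : R) ∈ J := by
      have := J.sub_mem hxJ (hMJ hsub)
      simpa using this
    have : (1 : R) ∈ J := by
      have := J.mul_mem_left (algebraMap k R c⁻¹) hx0J
      rw [← hc, ← map_mul, inv_mul_cancel₀ hc0, map_one] at this
      exact this
    exact this
  -- every prime containing f contains the irrelevant ideal
  have hprime : ∀ P : Ideal R, P.IsPrime → f ∈ P → M ≤ P := by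
    intro P hP hfP
    set Q : Ideal R := (P.homogeneousCore 𝒜).toIdeal with hQdef
    have hQprime : Q.IsPrime := hP.homogeneousCore (𝒜 := 𝒜)
    have hQP : Q ≤ P := Ideal.toIdeal_homogeneousCore_le 𝒜 P
    have hfQ : f ∈ Q :=
      Ideal.mem_homogeneousCore_of_homogeneous_of_mem ⟨a, hf⟩ hfP
    obtain ⟨Q0, hQ0min, hQ0le⟩ := Ideal.exists_minimalPrimes_le (I := ⊥) (J := Q) bot_le
    have hQ0min' : Q0 ∈ minimalPrimes R := hQ0min
    have hlt : Q0 < Q := lt_of_le_of_ne hQ0le (fun h => hgen Q0 hQ0min' (h ▸ hfQ))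
    -- Q is maximal
    have hQmax : Q.IsMaximal := by
      by_contra hnm
      obtain ⟨N, hNmax, hQN⟩ := Ideal.exists_le_maximal Q hQprime.ne_top
      have hQNlt : Q < N := lt_of_le_of_ne hQN (by rintro rfl; exact hnm hNmax)
      exact noChain Q0 Q N hQ0min'.1.1 hQprime hNmax.isPrime hlt hQNlt
    have hQM : Q ≤ M := hhom_le Q (P.homogeneousCore 𝒜).is_homogeneous' hQprime.ne_top
    have : Q = M := hQmax.eq_of_le hMne hQM
    exact this ▸ hQP
  -- 𝒜 1 lies in the radical of (f)
  have hrad : (𝒜 1 : Set R) ⊆ (Ideal.span {f}).radical := by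
    intro x hx
    have hxM : x ∈ M := by
      rw [hmemM]
      exact DirectSum.decompose_of_mem_ne 𝒜 hx (by norm_num)
    rw [Ideal.radical_eq_sInf]
    refine Ideal.mem_sInf.2 ?_
    rintro P ⟨hfP, hPprime⟩
    exact hprime P hPprime (hfP (Ideal.subset_span rfl)) hxM
  set I : Ideal R := Ideal.span (𝒜 1 : Set R) with hI
  have hIrad : I ≤ (Ideal.span {f}).radical := Ideal.span_le.2 hrad
  obtain ⟨γ, hγ⟩ := Ideal.exists_radical_pow_le_of_fg (Ideal.span {f})
    (IsNoetherian.noetherian _)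
  have hIγ : I ^ γ ≤ Ideal.span {f} :=
    le_trans (pow_le_pow_left' hIrad γ) hγ
  -- 𝒜 m ⊆ I ^ m
  have hpow : ∀ m : ℕ, ∀ x ∈ 𝒜 m, x ∈ I ^ m := by
    have key : ∀ m : ℕ, (𝒜 1 ^ m : Submodule k R) ≤ (I ^ m : Ideal R).restrictScalars k := by
      intro m
      induction m with
      | zero =>
        rw [pow_zero, pow_zero, Ideal.one_eq_top]
        exact le_top
      | succ n ih =>
        rw [pow_succ, pow_succ]
        refine Submodule.mul_le.2 fun x hx y hy => ?_
        exact Ideal.mul_mem_mul (ih hx) (Ideal.subset_span hy)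
    intro m x hx
    exact key m (by rwa [← hstd m])
  -- elements of degree ≥ γ lie in (f)
  have hdeg : ∀ m : ℕ, γ ≤ m → ∀ r ∈ 𝒜 m, r ∈ Ideal.span {f} := by
    intro m hm r hr
    exact hIγ (Ideal.pow_le_pow_right hm (hpow m r hr))
  refine ⟨γ, ?_⟩
  intro β
  induction β with
  | zero =>
    intro m _ r _
    simp [Ideal.span_singleton_one]
  | succ β ih =>
    intro m hm r hr
    rw [Nat.succ_mul] at hm
    have hma : a ≤ m := le_trans (by linarith [Nat.zero_le (β * a), Nat.zero_le γ]) hm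
    have hmγ : γ ≤ m := le_trans (by linarith [Nat.zero_le (β * a), Nat.zero_le a]) hm
    obtain ⟨s, hs⟩ := Ideal.mem_span_singleton.1 (hdeg m hmγ r hr)
    set s' : R := (DirectSum.decompose 𝒜 s (m - a) : R) with hs'
    have hkey : f * s' = r := by
      have h1 := DirectSum.coe_decompose_mul_add_of_left_mem 𝒜 (b := s) (j := m - a) hf
      rw [Nat.add_sub_cancel' hma, ← hs,
        DirectSum.decompose_of_mem_same 𝒜 hr] at h1
      exact h1.symm
    have hsub : β * a + γ ≤ m - a := Nat.le_sub_of_add_le (by linarith)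
    have hs'mem : s' ∈ Ideal.span {f ^ β} :=
      ih (m - a) hsub s' (SetLike.coe_mem _)
    obtain ⟨u, hu⟩ := Ideal.mem_span_singleton.1 hs'mem
    rw [Ideal.mem_span_singleton]
    refine ⟨u, ?_⟩
    rw [← hkey, hu, pow_succ]
    ring
end

section
/- Let k be a field of characteristic p > 0 and let R be a standard-graded k-algebra of Krull dimension one. Let f ∈ R be homogeneous of degree a ≥ 1 and not contained in any minimal prime of R (the genericity condition), and let I = (f). Then every homogeneous element of R of degree a+1 lies in the Frobenius closure I^F, and every homogeneous element of R of degree a lies in the tight closure I^*. -/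
open scoped BigOperators

/-- Frobenius closure of an ideal in a ring of characteristic `p`. -/
def frobeniusClosure {R : Type*} [CommRing R] (p : ℕ) (I : Ideal R) : Set R :=
  {x | ∃ e : ℕ, x ^ p ^ e ∈ bracketPow I (p ^ e)}

section Aux

variable {k : Type*} [Field k] {R : Type*} [CommRing R] [Algebra k R]
  (𝒜 : ℕ → Submodule k R) [GradedAlgebra 𝒜]

/-- The degree-zero component of a multiple of a degree-one element vanishes. -/
lemma decompose_zero_of_mul_deg_one {x : R} (hx : x ∈ 𝒜 1) (r : R) :
    (DirectSum.decompose 𝒜 (r * x) 0 : R) = 0 := by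
  refine DirectSum.Decomposition.inductionOn 𝒜 (motive := fun r => (DirectSum.decompose 𝒜 (r * x) 0 : R) = 0) ?_ ?_ ?_ r
  · show (DirectSum.decompose 𝒜 ((0:R) * x) 0 : R) = 0
    rw [zero_mul, DirectSum.decompose_zero]; rfl
  · intro i m
    exact DirectSum.decompose_of_mem_ne 𝒜 (SetLike.mul_mem_graded m.2 hx) (by omega)
  · intro m m' hm hm'
    rw [add_mul, DirectSum.decompose_add, DirectSum.add_apply, Submodule.coe_add, hm, hm',
      add_zero]

/-- Every degree-one element is in the radical of the ideal generated by a homogeneous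
parameter, in a one-dimensional graded ring. -/
lemma deg_one_mem_radical [IsNoetherianRing R]
    (hdim : ringKrullDim R = 1)
    {f : R} {a : ℕ} (hf : f ∈ 𝒜 a)
    (hgen : ∀ P ∈ minimalPrimes R, f ∉ P) :
    ∀ x ∈ 𝒜 1, x ∈ (Ideal.span {f}).radical := by
  intro x hx
  rw [Ideal.radical_eq_sInf, Ideal.mem_sInf]
  rintro P ⟨hfP, hP⟩
  by_contra hxP
  set P' : Ideal R := (P.homogeneousCore 𝒜).toIdeal with hP'def
  have hP'prime : P'.IsPrime := hP.homogeneousCore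
  have hP'le : P' ≤ P := Ideal.toIdeal_homogeneousCore_le 𝒜 P
  have hfP' : f ∈ P' :=
    Ideal.mem_homogeneousCore_of_homogeneous_of_mem ⟨a, hf⟩ (hfP (Ideal.subset_span rfl))
  haveI : P'.IsPrime := hP'prime
  obtain ⟨Q, hQmin, hQle⟩ := Ideal.exists_minimalPrimes_le (I := ⊥) (J := P') bot_le
  have hQmin' : Q ∈ minimalPrimes R := hQmin
  have hQprime : Q.IsPrime := hQmin.1.1
  have hQlt : Q < P' := lt_of_le_of_ne hQle (fun h => hgen Q hQmin' (h.symm ▸ hfP'))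
  -- `P' ⊔ (x)` is a proper ideal
  have hne : P' ⊔ Ideal.span {x} ≠ ⊤ := by
    intro htop
    have h1 : (1 : R) ∈ P' ⊔ Ideal.span {x} := htop ▸ Submodule.mem_top
    obtain ⟨y, hy, z, hz, hyz⟩ := Submodule.mem_sup.mp h1
    obtain ⟨r, hr⟩ := Ideal.mem_span_singleton'.mp hz
    have hy0 : (DirectSum.decompose 𝒜 y 0 : R) ∈ P' :=
      (P.homogeneousCore 𝒜).is_homogeneous' 0 hy
    have hz0 : (DirectSum.decompose 𝒜 z 0 : R) = 0 := by
      rw [← hr]; exact decompose_zero_of_mul_deg_one 𝒜 hx r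
    have h1' : (DirectSum.decompose 𝒜 (y + z) 0 : R) = 1 := by
      rw [hyz]
      exact DirectSum.decompose_of_mem_same 𝒜 SetLike.GradedOne.one_mem
    rw [DirectSum.decompose_add, DirectSum.add_apply, Submodule.coe_add, hz0, add_zero] at h1'
    exact hP'prime.ne_top (Ideal.eq_top_of_isUnit_mem _ (h1' ▸ hy0) isUnit_one)
  obtain ⟨M, hMmax, hMle⟩ := Ideal.exists_le_maximal _ hne
  have hxM : x ∈ M := hMle (Ideal.mem_sup_right (Ideal.subset_span rfl))
  have hP'M : P' < M :=
    lt_of_le_of_ne (le_trans le_sup_left hMle) (by rintro rfl; exact hxP (hP'le hxM))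
  -- build a strict chain of length two in the prime spectrum
  let c : LTSeries (PrimeSpectrum R) :=
    ⟨2, ![⟨Q, hQprime⟩, ⟨P', hP'prime⟩, ⟨M, hMmax.isPrime⟩], by
      intro i
      fin_cases i
      · exact (PrimeSpectrum.asIdeal_lt_asIdeal _ _).mp hQlt
      · exact (PrimeSpectrum.asIdeal_lt_asIdeal _ _).mp hP'M⟩
  have h2 : (2 : WithBot (WithTop ℕ)) ≤ ringKrullDim R := by
    have h := Order.LTSeries.length_le_krullDim c
    change ((2:ℕ) : WithBot ℕ∞) ≤ _ at h
    exact_mod_cast h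
  rw [hdim] at h2
  exact absurd h2 (by intro h; have := WithBot.coe_le_coe.mp (h : ((2:ℕ∞) : WithBot ℕ∞) ≤ ((1:ℕ∞) : WithBot ℕ∞)); have h3 := ENat.coe_le_coe.mp (this : ((2:ℕ):ℕ∞) ≤ ((1:ℕ):ℕ∞)); norm_num at h3)

end Aux

theorem dimension_one_closure_bounds
    {k : Type*} [Field k] (p : ℕ) [Fact p.Prime] [CharP k p]
    {R : Type*} [CommRing R] [IsNoetherianRing R] [Algebra k R]
    (𝒜 : ℕ → Submodule k R) [GradedAlgebra 𝒜]
    (hstd : ∀ n, 𝒜 n = 𝒜 1 ^ n)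
    (hfd : FiniteDimensional k (𝒜 1))
    (hdim : ringKrullDim R = 1)
    (f : R) (a : ℕ) (ha : 1 ≤ a) (hf : f ∈ 𝒜 a)
    (hgen : ∀ P ∈ minimalPrimes R, f ∉ P) :
    (∀ r ∈ 𝒜 (a + 1), r ∈ frobeniusClosure p (Ideal.span {f})) ∧
      (∀ r ∈ 𝒜 a, r ∈ tightClosure p (Ideal.span {f})) := by
  classical
  -- Step 1: the ideal generated by degree-one elements lies in the radical of `(f)`.
  set J : Ideal R := Ideal.span (𝒜 1 : Set R) with hJdef
  have hJrad : J ≤ (Ideal.span {f} : Ideal R).radical :=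
    Ideal.span_le.mpr (fun x hx => deg_one_mem_radical 𝒜 hdim hf hgen x hx)
  obtain ⟨c, hc⟩ := Ideal.exists_pow_le_of_le_radical_of_fg hJrad
    (IsNoetherian.noetherian J)
  -- Step 2: `𝒜 n ⊆ J ^ n` for all `n`.
  have hpow : ∀ n : ℕ, ∀ r ∈ 𝒜 1 ^ n, r ∈ J ^ n := by
    intro n
    induction n with
    | zero => intro r _; simp [Ideal.one_eq_top]
    | succ n ih =>
      intro r hr
      rw [pow_succ] at hr
      refine Submodule.mul_induction_on hr ?_ ?_
      · intro m hm x hx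
        rw [pow_succ]
        exact Ideal.mul_mem_mul (ih m hm) (Ideal.subset_span hx)
      · intro y z hy hz
        exact Ideal.add_mem _ hy hz
  -- Step 3: high-degree components lie in `(f)`.
  have hev : ∀ n : ℕ, c ≤ n → ∀ r ∈ 𝒜 n, r ∈ Ideal.span ({f} : Set R) := by
    intro n hn r hr
    rw [hstd n] at hr
    exact hc (Ideal.pow_le_pow_right hn (hpow n r hr))
  -- Step 4: components of degree at least `c + q*a` lie in `(f^q)`.
  have key : ∀ q m : ℕ, c + q * a ≤ m → ∀ r ∈ 𝒜 m, r ∈ Ideal.span ({f ^ q} : Set R) := by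
    intro q
    induction q with
    | zero =>
      intro m _ r _
      exact Ideal.mem_span_singleton.mpr (by rw [pow_zero]; exact one_dvd r)
    | succ q ih =>
      intro m hm r hr
      have hm' : c + (q * a + a) ≤ m := by rw [Nat.succ_mul] at hm; exact hm
      set t : ℕ := q * a with htdef
      have hma : a ≤ m := by omega
      obtain ⟨s, hs⟩ := Ideal.mem_span_singleton'.mp (hev m (by omega) r hr)
      set j : ℕ := m - a with hjdef
      have hmj : m = a + j := by omega
      have hrs : r = f * (DirectSum.decompose 𝒜 s j : R) := by
        have h1 : (DirectSum.decompose 𝒜 r (a + j) : R) = r :=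
          DirectSum.decompose_of_mem_same 𝒜 (hmj ▸ hr)
        have h2 : (DirectSum.decompose 𝒜 (f * s) (a + j) : R)
            = f * (DirectSum.decompose 𝒜 s j : R) :=
          DirectSum.coe_decompose_mul_add_of_left_mem 𝒜 hf
        calc r = (DirectSum.decompose 𝒜 r (a + j) : R) := h1.symm
          _ = (DirectSum.decompose 𝒜 (f * s) (a + j) : R) := by rw [mul_comm f s, hs]
          _ = f * (DirectSum.decompose 𝒜 s j : R) := h2
      have hjmem : (DirectSum.decompose 𝒜 s j : R) ∈ 𝒜 j := SetLike.coe_mem _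
      have hjdeg : c + t ≤ j := by omega
      obtain ⟨w, hw⟩ :=
        Ideal.mem_span_singleton.mp (ih j hjdeg _ hjmem)
      refine Ideal.mem_span_singleton.mpr ⟨w, ?_⟩
      rw [hrs, hw, pow_succ]
      ring
  -- Auxiliary facts
  have hq1 : ∀ q : ℕ, f ^ q ∈ bracketPow (Ideal.span {f}) q := fun q =>
    Ideal.subset_span ⟨f, Ideal.subset_span rfl, rfl⟩
  have hspanle : ∀ q : ℕ, Ideal.span ({f ^ q} : Set R) ≤ bracketPow (Ideal.span {f}) q :=
    fun q => Ideal.span_le.mpr (by simpa using hq1 q)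
  constructor
  · -- Frobenius closure part
    intro r hr
    refine ⟨c, ?_⟩
    set q : ℕ := p ^ c with hqdef
    have hcq : c ≤ q := le_of_lt (Nat.lt_pow_self (n := c) (Fact.out (p := p.Prime)).one_lt)
    have hrq : r ^ q ∈ 𝒜 (q * (a + 1)) := by
      simpa [smul_eq_mul] using SetLike.pow_mem_graded q hr
    have : r ^ q ∈ Ideal.span ({f ^ q} : Set R) :=
      key q (q * (a + 1)) (by nlinarith) _ hrq
    exact hspanle q this
  · -- tight closure part
    intro r hr
    refine ⟨f ^ c, ?_, 0, ?_⟩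
    · intro P hP hfc
      exact hgen P hP (hP.1.1.mem_of_pow_mem c hfc)
    · intro e _
      set q : ℕ := p ^ e with hqdef
      have hq0 : 1 ≤ q := Nat.one_le_pow _ _ (Fact.out (p := p.Prime)).pos
      have hmem : f ^ c * r ^ q ∈ 𝒜 (c * a + q * a) := by
        have h1 : f ^ c ∈ 𝒜 (c * a) := by
          simpa [smul_eq_mul] using SetLike.pow_mem_graded c hf
        have h2 : r ^ q ∈ 𝒜 (q * a) := by
          simpa [smul_eq_mul] using SetLike.pow_mem_graded q hr
        exact SetLike.mul_mem_graded h1 h2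
      have : f ^ c * r ^ q ∈ Ideal.span ({f ^ q} : Set R) :=
        key q (c * a + q * a) (by nlinarith) _ hmem
      exact hspanle q this
end

section
/- Fix natural numbers n ≥ 2 and a ≥ 1 and let F be the Fröberg function for n forms of constant degree a in 2 variables (d = 1), i.e. F(m) = Σ_{s=0}^{n} (−1)^s C(n,s)·C°(1 + m − s·a, 1). Set m_0 = ⌈n·a/(n−1)⌉ − 1. Then F(m) > 0 for every natural number m < m_0 and F(m_0) ≤ 0; that is, m_0 is the smallest zero of F^+ = max(F, 0). -/
open scoped BigOperators

/-- Modified binomial coefficient `C°(N, K)`: the usual binomial coefficient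
`C(N, K)` if `N ≥ K ≥ 0`, and `0` otherwise. -/
def cBinom (N : ℤ) (K : ℕ) : ℤ :=
  if (K : ℤ) ≤ N then (N.toNat.choose K : ℤ) else 0

/-- The Fröberg function for `n` forms of constant degree `a` in `d + 1` variables:
`F(m) = Σ_{s=0}^{n} (−1)^s C(n,s) · C°(d + m − s·a, d)`. -/
def froberg (n d a : ℕ) (m : ℕ) : ℤ :=
  ∑ s ∈ Finset.range (n + 1),
    (-1 : ℤ) ^ s * (n.choose s : ℤ) * cBinom ((d : ℤ) + m - s * a) d

lemma cBinom_one (N : ℤ) : cBinom N 1 = max N 0 := by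
  unfold cBinom
  split_ifs with h
  · rw [Nat.choose_one_right, Int.toNat_of_nonneg (by omega)]
    exact (max_eq_left (by omega)).symm
  · exact (max_eq_right (by omega)).symm

lemma froberg_small (n a m : ℕ) (hn : 1 ≤ n) (hm : m < 2 * a) :
    froberg n 1 a m = (1 + m : ℤ) - n * max ((1 : ℤ) + m - a) 0 := by
  unfold froberg
  have hsub : Finset.range 2 ⊆ Finset.range (n + 1) := Finset.range_subset_range.mpr (by omega)
  rw [← Finset.sum_subset hsub ?hz]
  · simp [Finset.sum_range_succ, cBinom_one, Nat.choose_one_right]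
    have h1 : max ((1 : ℤ) + m) 0 = 1 + m := max_eq_left (by positivity)
    rw [h1]; ring
  case hz =>
    intro s hs hs2
    simp only [Finset.mem_range] at hs2
    have h2s : (2 : ℤ) ≤ s := by exact_mod_cast (by omega : 2 ≤ s)
    have hm' : (m : ℤ) < 2 * a := by exact_mod_cast hm
    have hc : cBinom (((1 : ℕ) : ℤ) + m - s * a) 1 = 0 := by
      unfold cBinom
      rw [if_neg]
      push_neg
      have ha0 : (0 : ℤ) ≤ a := Int.ofNat_nonneg a
      nlinarith
    rw [hc, mul_zero]

theorem froberg_smallest_zero_dim_two (n a : ℕ) (hn : 2 ≤ n) (ha : 1 ≤ a)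
    (m₀ : ℕ) (hm₀ : (m₀ : ℤ) = ⌈(n * a : ℚ) / ((n : ℚ) - 1)⌉ - 1) :
    (∀ m : ℕ, m < m₀ → 0 < froberg n 1 a m) ∧ froberg n 1 a m₀ ≤ 0 := by
  have hn1 : (0 : ℚ) < (n : ℚ) - 1 := by
    have : (2 : ℚ) ≤ n := by exact_mod_cast hn
    linarith
  have hnz : (2 : ℤ) ≤ n := by exact_mod_cast hn
  have haz : (1 : ℤ) ≤ a := by exact_mod_cast ha
  have key : ∀ z : ℤ, ((m₀ : ℤ) + 1 ≤ z) ↔ ((n : ℤ) * a ≤ z * ((n : ℤ) - 1)) := by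
    intro z
    have h1 : (m₀ : ℤ) + 1 = ⌈(n * a : ℚ) / ((n : ℚ) - 1)⌉ := by omega
    rw [h1, Int.ceil_le, div_le_iff₀ hn1]
    constructor <;> intro h <;> exact_mod_cast h
  have hma : a ≤ m₀ := by
    by_contra h
    push_neg at h
    have hle : (m₀ : ℤ) + 1 ≤ a := by exact_mod_cast h
    have := (key a).mp hle
    nlinarith
  have hm2a : m₀ < 2 * a := by
    have h2 : (n : ℤ) * a ≤ (2 * a) * ((n : ℤ) - 1) := by nlinarith
    have := (key (2 * a)).mpr h2
    omega
  constructor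
  · intro m hm
    rw [froberg_small n a m (by omega) (by omega)]
    by_cases h : a ≤ m
    · have hmax : max ((1 : ℤ) + m - a) 0 = 1 + m - a :=
        max_eq_left (by omega)
      rw [hmax]
      have hk : ¬ ((n : ℤ) * a ≤ ((m : ℤ) + 1) * ((n : ℤ) - 1)) := by
        intro hc
        have := (key ((m : ℤ) + 1)).mpr hc
        omega
      push_neg at hk
      nlinarith
    · have hmax : max ((1 : ℤ) + m - a) 0 = 0 :=
        max_eq_right (by omega)
      rw [hmax]
      have : (0 : ℤ) ≤ m := Int.ofNat_nonneg m
      linarith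
  · rw [froberg_small n a m₀ (by omega) hm2a]
    have hmax : max ((1 : ℤ) + m₀ - a) 0 = 1 + m₀ - a :=
      max_eq_left (by omega)
    rw [hmax]
    have := (key ((m₀ : ℤ) + 1)).mp le_rfl
    nlinarith
end

section
/- Let k be a field of characteristic p > 0, let R = k[x,y]/(xy), and let a, b ∈ k be nonzero. Let I = (a·x̄ + b·ȳ) ⊆ R, where x̄, ȳ denote the residue classes of x and y. Then: (1) x̄ does not belong to the Frobenius closure I^F; that is, for every q = p^e one has x̄^q ∉ I^{[q]} = (a^q x̄^q + b^q ȳ^q); and (2) letting S denote the integral closure of R in its total ring of fractions (the localization of R at its nonzerodivisors), the image of x̄ in S belongs to the extended ideal I·S. -/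
open MvPolynomial

/-- The ring `R = k[x,y]/(xy)`. -/
noncomputable abbrev Rxy (k : Type*) [Field k] : Type _ :=
  MvPolynomial (Fin 2) k ⧸ Ideal.span {(X 0 * X 1 : MvPolynomial (Fin 2) k)}

/-- The residue class `x̄` of `x` in `k[x,y]/(xy)`. -/
noncomputable abbrev xbar (k : Type*) [Field k] : Rxy k :=
  Ideal.Quotient.mk _ (X 0 : MvPolynomial (Fin 2) k)

/-- The residue class `ȳ` of `y` in `k[x,y]/(xy)`. -/
noncomputable abbrev ybar (k : Type*) [Field k] : Rxy k :=
  Ideal.Quotient.mk _ (X 1 : MvPolynomial (Fin 2) k)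

/-! ### Auxiliary lemmas -/

private lemma bracketPow_span_singleton' {R : Type*} [CommRing R] (f : R) (q : ℕ) :
    bracketPow (Ideal.span {f}) q = Ideal.span {f ^ q} := by
  apply le_antisymm
  · rw [bracketPow, Ideal.span_le]
    rintro _ ⟨h, hh, rfl⟩
    rw [SetLike.mem_coe, Ideal.mem_span_singleton]
    obtain ⟨c, rfl⟩ := Ideal.mem_span_singleton.mp hh
    exact ⟨c ^ q, mul_pow f c q⟩
  · rw [Ideal.span_le, Set.singleton_subset_iff]
    exact Ideal.subset_span ⟨f, Ideal.mem_span_singleton_self f, rfl⟩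

private lemma eval_zero_aeval' {k : Type*} [Field k] (v : Fin 2 → Polynomial k)
    (hv : ∀ i, (v i).eval 0 = 0) (P : MvPolynomial (Fin 2) k) :
    Polynomial.eval 0 ((aeval v) P) = (aeval (fun _ : Fin 2 => (0:k))) P := by
  induction P using MvPolynomial.induction_on with
  | C a => simp
  | add p q hp hq => simp [hp, hq]
  | mul_X p i hp => simp [hp, hv i]

private lemma prime_X0' {k : Type*} [Field k] : Prime (X 0 : MvPolynomial (Fin 2) k) := by
  rw [← MulEquiv.prime_iff (finSuccEquiv k 1).toMulEquiv]
  show Prime ((finSuccEquiv k 1) (X 0))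
  rw [finSuccEquiv_X_zero]
  exact Polynomial.prime_X

private lemma prime_X1' {k : Type*} [Field k] : Prime (X 1 : MvPolynomial (Fin 2) k) := by
  rw [← MulEquiv.prime_iff (renameEquiv k (Equiv.swap (0:Fin 2) 1)).toMulEquiv]
  show Prime ((renameEquiv k (Equiv.swap (0:Fin 2) 1)) (X 1))
  rw [renameEquiv_apply, rename_X, Equiv.swap_apply_right]
  exact prime_X0'

private lemma not_dvd_G0' {k : Type*} [Field k] {a b : k} (hb : b ≠ 0) :
    ¬ (X 0 : MvPolynomial (Fin 2) k) ∣ (C a * X 0 + C b * X 1) := by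
  rintro ⟨H, hH⟩
  have := congrArg (aeval ![(0 : Polynomial k), Polynomial.X]) hH
  simp [Polynomial.X_ne_zero, hb] at this

private lemma not_dvd_G1' {k : Type*} [Field k] {a b : k} (ha : a ≠ 0) :
    ¬ (X 1 : MvPolynomial (Fin 2) k) ∣ (C a * X 0 + C b * X 1) := by
  rintro ⟨H, hH⟩
  have := congrArg (aeval ![(Polynomial.X : Polynomial k), 0]) hH
  simp [Polynomial.X_ne_zero, ha] at this

private lemma X0X1_dvd' {k : Type*} [Field k] {P : MvPolynomial (Fin 2) k}
    (h0 : X 0 ∣ P) (h1 : X 1 ∣ P) : (X 0 : MvPolynomial (Fin 2) k) * X 1 ∣ P := by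
  obtain ⟨Q, rfl⟩ := h0
  rcases (prime_X1' (k := k)).2.2 _ _ h1 with h | h
  · rw [X_dvd_X] at h; exact absurd h (by decide)
  · obtain ⟨Q', rfl⟩ := h
    exact ⟨Q', by ring⟩

private lemma g_nzd' {k : Type*} [Field k] {a b : k} (ha : a ≠ 0) (hb : b ≠ 0) :
    (Ideal.Quotient.mk (Ideal.span {(X 0 * X 1 : MvPolynomial (Fin 2) k)})
      (C a * X 0 + C b * X 1)) ∈
      nonZeroDivisors (MvPolynomial (Fin 2) k ⧸
        Ideal.span {(X 0 * X 1 : MvPolynomial (Fin 2) k)}) := by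
  rw [mem_nonZeroDivisors_iff_right]
  intro x hx
  obtain ⟨P, rfl⟩ := Ideal.Quotient.mk_surjective x
  rw [← map_mul, Ideal.Quotient.eq_zero_iff_mem, Ideal.mem_span_singleton] at hx
  have h0 : (X 0 : MvPolynomial (Fin 2) k) ∣ P := by
    rcases (prime_X0' (k := k)).2.2 _ _ ((dvd_mul_right _ _).trans hx) with h | h
    · exact h
    · exact absurd h (not_dvd_G0' hb)
  have h1 : (X 1 : MvPolynomial (Fin 2) k) ∣ P := by
    rcases (prime_X1' (k := k)).2.2 _ _ (((dvd_mul_left _ _).trans hx)) with h | h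
    · exact h
    · exact absurd h (not_dvd_G1' ha)
  rw [Ideal.Quotient.eq_zero_iff_mem, Ideal.mem_span_singleton]
  exact X0X1_dvd' h0 h1

private lemma isIntegral_of_quadratic' {R S : Type*} [CommRing R] [Ring S] [Algebra R S]
    [Nontrivial R] {t : S} {c : R} (h : t * t = algebraMap R S c * t) : IsIntegral R t := by
  refine ⟨Polynomial.X ^ 2 - Polynomial.C c * Polynomial.X, ?_, ?_⟩
  · apply Polynomial.monic_X_pow_sub
    calc (Polynomial.C c * Polynomial.X).degree
        ≤ (Polynomial.C c).degree + Polynomial.X.degree := Polynomial.degree_mul_le _ _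
      _ ≤ 0 + 1 := add_le_add Polynomial.degree_C_le Polynomial.degree_X.le
      _ < 2 := by norm_num
  · have h6 : Polynomial.eval₂ (algebraMap R S) t
        (Polynomial.X ^ 2 - Polynomial.C c * Polynomial.X) =
        t ^ 2 - algebraMap R S c * t := by
      rw [Polynomial.eval₂_sub, Polynomial.eval₂_X_pow, Polynomial.eval₂_mul_X,
        Polynomial.eval₂_C]
    rw [h6, pow_two, h, sub_self]

set_option maxHeartbeats 1000000 in
set_option synthInstance.maxHeartbeats 400000 in
theorem frobenius_closure_not_commute_with_normalization
    {k : Type*} [Field k] (p : ℕ) [Fact p.Prime] [CharP k p]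
    (a b : k) (ha : a ≠ 0) (hb : b ≠ 0) :
    (∀ e : ℕ,
      (xbar k) ^ p ^ e ∉
        bracketPow (Ideal.span {Ideal.Quotient.mk _
          (C a * X 0 + C b * X 1 : MvPolynomial (Fin 2) k)}) (p ^ e)) ∧
    (algebraMap (Rxy k) (integralClosure (Rxy k) (FractionRing (Rxy k))) (xbar k) ∈
      (Ideal.span {Ideal.Quotient.mk _
          (C a * X 0 + C b * X 1 : MvPolynomial (Fin 2) k)}).map
        (algebraMap (Rxy k) (integralClosure (Rxy k) (FractionRing (Rxy k))))) := by
  constructor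
  · -- Part 1: `x̄ ∉ I^F`
    intro e h
    set q := p ^ e with hqdef
    have hq : 0 < q := pow_pos (Fact.out : p.Prime).pos e
    rw [bracketPow_span_singleton', ← map_pow, Ideal.mem_span_singleton] at h
    obtain ⟨c, hc⟩ := h
    obtain ⟨P, rfl⟩ := Ideal.Quotient.mk_surjective c
    have h2 : (X 0 : MvPolynomial (Fin 2) k) ^ q -
        (C a * X 0 + C b * X 1) ^ q * P ∈
        Ideal.span {(X 0 * X 1 : MvPolynomial (Fin 2) k)} := by
      rw [← Ideal.Quotient.eq_zero_iff_mem, map_sub, map_mul, sub_eq_zero, map_pow]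
      exact hc
    obtain ⟨Q, hQ⟩ := Ideal.mem_span_singleton.mp h2
    rw [sub_eq_iff_eq_add] at hQ
    have he0 : (aeval ![(0 : Polynomial k), Polynomial.X]) P = 0 := by
      have h3 := congrArg (aeval ![(0 : Polynomial k), Polynomial.X]) hQ
      simp only [map_add, map_mul, map_pow, aeval_X, aeval_C, Matrix.cons_val_zero,
        Matrix.cons_val_one, Matrix.head_cons, mul_zero, zero_mul, add_zero, zero_add,
        mul_pow, Polynomial.algebraMap_eq, zero_pow hq.ne'] at h3
      rcases mul_eq_zero.mp h3.symm with h4 | h4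
      · exact absurd h4 (by simp [Polynomial.X_ne_zero, hb, hq.ne'])
      · exact h4
    have he1 : (Polynomial.X : Polynomial k) ^ q =
        (Polynomial.C a) ^ q * Polynomial.X ^ q *
          (aeval ![(Polynomial.X : Polynomial k), 0]) P := by
      have h3 := congrArg (aeval ![(Polynomial.X : Polynomial k), 0]) hQ
      simp only [map_add, map_mul, map_pow, aeval_X, aeval_C, Matrix.cons_val_zero,
        Matrix.cons_val_one, Matrix.head_cons, mul_zero, zero_mul, add_zero, zero_add,
        mul_pow, Polynomial.algebraMap_eq] at h3
      exact h3
    have hXq : (Polynomial.X : Polynomial k) ^ q ≠ 0 := pow_ne_zero _ Polynomial.X_ne_zero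
    have h4 : (1 : Polynomial k) =
        (Polynomial.C a) ^ q * (aeval ![(Polynomial.X : Polynomial k), 0]) P :=
      mul_left_cancel₀ hXq (by linear_combination he1)
    have h5 := congrArg (Polynomial.eval 0) h4
    rw [Polynomial.eval_one, Polynomial.eval_mul, Polynomial.eval_pow, Polynomial.eval_C,
      eval_zero_aeval' _ (by intro i; fin_cases i <;> simp) P,
      ← eval_zero_aeval' ![(0 : Polynomial k), Polynomial.X]
        (by intro i; fin_cases i <;> simp) P, he0] at h5
    simp at h5
  · -- Part 2: the image of `x̄` lies in `I·S`
    set J := Ideal.span {(X 0 * X 1 : MvPolynomial (Fin 2) k)} with hJ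
    set G : MvPolynomial (Fin 2) k := C a * X 0 + C b * X 1 with hG
    have hg : (Ideal.Quotient.mk J G) ∈ nonZeroDivisors (Rxy k) := g_nzd' ha hb
    obtain ⟨u, hu⟩ :
        IsUnit (algebraMap (Rxy k) (FractionRing (Rxy k)) (Ideal.Quotient.mk J G)) :=
      IsLocalization.map_units (FractionRing (Rxy k)) ⟨_, hg⟩
    set t : FractionRing (Rxy k) :=
      algebraMap (Rxy k) (FractionRing (Rxy k)) (xbar k) * ↑u⁻¹ with ht
    have hCa : (C a⁻¹ : MvPolynomial (Fin 2) k) * C a = 1 := by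
      rw [← C_mul, inv_mul_cancel₀ ha, C_1]
    have hkey : (xbar k) * (xbar k) =
        Ideal.Quotient.mk J (C a⁻¹) * (xbar k) * Ideal.Quotient.mk J G := by
      rw [← map_mul, ← map_mul, ← map_mul, Ideal.Quotient.eq, Ideal.mem_span_singleton]
      refine ⟨-(C a⁻¹ * C b), ?_⟩
      linear_combination (-(X 0 * X 0) : MvPolynomial (Fin 2) k) * hCa
    have hm := congrArg (algebraMap (Rxy k) (FractionRing (Rxy k))) hkey
    simp only [map_mul] at hm
    rw [← hu] at hm
    have ht2 : t * t =
        algebraMap (Rxy k) (FractionRing (Rxy k)) (Ideal.Quotient.mk J (C a⁻¹)) * t := by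
      have expand : t * t =
          (algebraMap (Rxy k) (FractionRing (Rxy k)) (xbar k) *
            algebraMap (Rxy k) (FractionRing (Rxy k)) (xbar k)) * (↑u⁻¹ * ↑u⁻¹) := by
        rw [ht]; ring
      rw [expand, hm,
        show algebraMap (Rxy k) (FractionRing (Rxy k)) (Ideal.Quotient.mk J (C a⁻¹)) *
          algebraMap (Rxy k) (FractionRing (Rxy k)) (xbar k) * ↑u * (↑u⁻¹ * ↑u⁻¹) =
          algebraMap (Rxy k) (FractionRing (Rxy k)) (Ideal.Quotient.mk J (C a⁻¹)) *
          (algebraMap (Rxy k) (FractionRing (Rxy k)) (xbar k) * ↑u⁻¹) * (↑u * ↑u⁻¹) by ring,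
        u.mul_inv, mul_one, ht]
    have hJtop : J ≠ ⊤ := by
      rw [Ideal.ne_top_iff_one]
      intro h1
      rw [hJ, Ideal.mem_span_singleton] at h1
      exact (prime_X0').2.1 (isUnit_of_dvd_one ((dvd_mul_right _ _).trans h1))
    haveI : Nontrivial (Rxy k) := Ideal.Quotient.nontrivial_iff.mpr hJtop
    have hti : IsIntegral (Rxy k) t := isIntegral_of_quadratic' ht2
    have hgmem : algebraMap (Rxy k) (integralClosure (Rxy k) (FractionRing (Rxy k)))
        (Ideal.Quotient.mk J G) ∈
        (Ideal.span {Ideal.Quotient.mk J G}).map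
          (algebraMap (Rxy k) (integralClosure (Rxy k) (FractionRing (Rxy k)))) :=
      Ideal.mem_map_of_mem _ (Ideal.mem_span_singleton_self _)
    have hx : algebraMap (Rxy k) (integralClosure (Rxy k) (FractionRing (Rxy k))) (xbar k) =
        (⟨t, hti⟩ : integralClosure (Rxy k) (FractionRing (Rxy k))) *
          algebraMap (Rxy k) (integralClosure (Rxy k) (FractionRing (Rxy k)))
            (Ideal.Quotient.mk J G) := by
      apply Subtype.ext
      show algebraMap (Rxy k) (FractionRing (Rxy k)) (xbar k) =
        t * algebraMap (Rxy k) (FractionRing (Rxy k)) (Ideal.Quotient.mk J G)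
      rw [ht, ← hu, mul_assoc, u.inv_mul, mul_one]
    rw [hx]
    exact Ideal.mul_mem_left _ _ hgmem
end
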